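/- Suppose f : ℝ^d → ℝ is L_f-smooth and ρ_f-weakly convex, h : ℝ^d → ℝ is L_h-smooth, g : ℝ^d → ℝ ∪ {+∞} is proper, lower semicontinuous and ρ-weakly convex, and let γ ∈ (0, min{1/ρ, 1/ρ_f}) and λ > 0. For x ∈ ℝ^d let Y_γ(x) be the unique minimizer over y ∈ ℝ^d of g(y) + (1/(2γ))‖y − (x − γ∇(f+h)(x))‖², and let T_γ(x) be the unique minimizer over u ∈ ℝ^d of f(u) + (1/(2γ))‖u − ((1 − λ)x + γ∇f(x) + λY_γ(x))‖². Then for every x̄ ∈ ℝ^d: T_γ(x̄) = x̄ if and only if Y_γ(x̄) = x̄. -/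

import Mathlib

open scoped RealInnerProductSpace

section Aux
variable {E : Type*} [NormedAddCommGroup E] [InnerProductSpace ℝ E] [CompleteSpace E]

lemma combo_sq (p q : E) {a b : ℝ} (hab : a + b = 1) :
    ‖a • p + b • q‖ ^ 2 = a * ‖p‖ ^ 2 + b * ‖q‖ ^ 2 - a * b * ‖p - q‖ ^ 2 := by
  have hb : b = 1 - a := by linarith
  subst hb
  rw [norm_add_sq_real, norm_sub_sq_real, norm_smul, norm_smul,
    real_inner_smul_left, real_inner_smul_right]
  simp only [Real.norm_eq_abs, mul_pow, sq_abs]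
  ring

lemma quad_hasGradientAt (c : ℝ) (w u : E) :
    HasGradientAt (fun v => c * ‖v - w‖ ^ 2) ((2 * c) • (u - w)) u := by
  have h1 : HasFDerivAt (fun v : E => v - w) (ContinuousLinearMap.id ℝ E) u :=
    (hasFDerivAt_id u).sub_const w
  have h2 := HasFDerivAt.inner (𝕜 := ℝ) h1 h1
  have h3 := h2.const_mul c
  have heq : (fun v : E => c * ⟪v - w, v - w⟫) = fun v => c * ‖v - w‖ ^ 2 := by
    funext v; rw [real_inner_self_eq_norm_sq]
  rw [heq] at h3
  rw [hasGradientAt_iff_hasFDerivAt]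
  refine h3.congr_fderiv ?_
  ext v
  simp [InnerProductSpace.toDual_apply_apply, fderivInnerCLM_apply, real_inner_smul_left,
    inner_sub_left, inner_sub_right, real_inner_comm]
  ring

lemma phi_hasGradientAt (f : E → ℝ) (hfd : Differentiable ℝ f) (c : ℝ) (w u : E) :
    HasGradientAt (fun v => f v + c * ‖v - w‖ ^ 2)
      (gradient f u + (2 * c) • (u - w)) u := by
  have h1 : HasGradientAt f (gradient f u) u := (hfd u).hasGradientAt
  have h2 := quad_hasGradientAt c w u
  rw [hasGradientAt_iff_hasFDerivAt] at h1 h2 ⊢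
  have h3 := h1.add h2
  refine h3.congr_fderiv ?_
  simp [map_add]

lemma convex_grad_le (φ : E → ℝ) (hc : ConvexOn ℝ Set.univ φ) {x G : E}
    (hg : HasGradientAt φ G x) (u : E) : ⟪G, u - x⟫ ≤ φ u - φ x := by
  set v := u - x with hv
  have hline : HasDerivAt (fun t : ℝ => x + t • v) v 0 := by
    simpa using ((hasDerivAt_id (0 : ℝ)).smul_const v).const_add x
  have hψ : HasDerivAt (fun t : ℝ => φ (x + t • v)) ⟪G, v⟫ 0 := by
    have hF : HasFDerivAt φ (InnerProductSpace.toDual ℝ E G) ((fun t : ℝ => x + t • v) 0) := by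
      simpa using hg.hasFDerivAt
    have hc := hF.comp_hasDerivAt 0 hline
    simp only [Function.comp_def, InnerProductSpace.toDual_apply_apply] at hc
    exact hc
  have hslope := hasDerivAt_iff_tendsto_slope.mp hψ
  have hslope' : Filter.Tendsto (slope (fun t : ℝ => φ (x + t • v)) 0) (nhdsWithin 0 (Set.Ioi 0))
      (nhds ⟪G, v⟫) :=
    hslope.mono_left (nhdsWithin_mono _ (fun t ht => ne_of_gt ht))
  refine le_of_tendsto hslope' ?_
  filter_upwards [Ioc_mem_nhdsGT_of_mem (by simp : (0:ℝ) ∈ Set.Ico (0:ℝ) 1)] with t ht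
  obtain ⟨ht0, ht1⟩ := ht
  have hpt : x + t • v = t • u + (1 - t) • x := by rw [hv]; module
  have hconv := hc.2 (Set.mem_univ u) (Set.mem_univ x) (le_of_lt ht0) (by linarith)
    (by ring : t + (1 - t) = 1)
  rw [slope_def_field]
  simp only [zero_smul, add_zero, sub_zero]
  rw [hpt, div_le_iff₀ ht0]
  simp only [smul_eq_mul] at hconv
  nlinarith [hconv]

lemma min_grad_zero (φ : E → ℝ) {x G : E} (hg : HasGradientAt φ G x)
    (hmin : ∀ u, φ x ≤ φ u) : G = 0 := by
  have hloc : IsLocalMin φ x := Filter.Eventually.of_forall hmin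
  have h0 := hloc.fderiv_eq_zero
  rw [hg.hasFDerivAt.fderiv] at h0
  have := congrArg (fun L : E →L[ℝ] ℝ => (InnerProductSpace.toDual ℝ E).symm L) h0
  simpa using this

lemma phi_convex (f : E → ℝ) (ρf γ : ℝ) (hγ0 : 0 < γ) (hρf : 0 ≤ ρf) (hρfγ : γ * ρf < 1)
    (hfwc : ConvexOn ℝ Set.univ (fun x : E => f x + (ρf / 2) * ‖x‖ ^ 2)) (w : E) :
    ConvexOn ℝ Set.univ (fun u : E => f u + 1 / (2 * γ) * ‖u - w‖ ^ 2) := by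
  have h2 : ρf / 2 ≤ 1 / (2 * γ) := by
    rw [div_le_div_iff₀ (by norm_num) (by linarith)]
    nlinarith
  have hψ : ConvexOn ℝ Set.univ
      (fun u : E => 1 / (2 * γ) * ‖u - w‖ ^ 2 - (ρf / 2) * ‖u‖ ^ 2) := by
    refine ⟨convex_univ, ?_⟩
    intro x _ y _ a b ha hb hab
    have hcombo : a • x + b • y - w = a • (x - w) + b • (y - w) := by
      conv_lhs => rw [show w = (a + b) • w by rw [hab, one_smul]]
      module
    simp only [smul_eq_mul]
    rw [hcombo, combo_sq (x - w) (y - w) hab, combo_sq x y hab,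
      show (x - w) - (y - w) = x - y by abel]
    nlinarith [mul_nonneg (mul_nonneg (mul_nonneg ha hb) (sq_nonneg ‖x - y‖))
      (sub_nonneg.mpr h2)]
  have heq : (fun u : E => f u + 1 / (2 * γ) * ‖u - w‖ ^ 2) =
      fun u : E => (f u + (ρf / 2) * ‖u‖ ^ 2) +
        (1 / (2 * γ) * ‖u - w‖ ^ 2 - (ρf / 2) * ‖u‖ ^ 2) := by
    funext u; ring
  rw [heq]
  exact hfwc.add hψ

end Aux

/-- `g` is `ρ`-weakly convex: `g + (ρ/2)‖·‖²` is convex (extended-real-valued version). -/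
def WeaklyConvexE {E : Type*} [NormedAddCommGroup E] [InnerProductSpace ℝ E]
    (ρ : ℝ) (g : E → EReal) : Prop :=
  ∀ x y : E, ∀ t : ℝ, 0 ≤ t → t ≤ 1 →
    g (t • x + (1 - t) • y) + (((ρ / 2) * ‖t • x + (1 - t) • y‖ ^ 2 : ℝ) : EReal) ≤
      (t : EReal) * (g x + (((ρ / 2) * ‖x‖ ^ 2 : ℝ) : EReal)) +
        ((1 - t : ℝ) : EReal) * (g y + (((ρ / 2) * ‖y‖ ^ 2 : ℝ) : EReal))

theorem T_fixed_iff_Y_fixed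
    {E : Type*} [NormedAddCommGroup E] [InnerProductSpace ℝ E] [FiniteDimensional ℝ E]
    (f h : E → ℝ) (g : E → EReal) (Lf Lh ρ ρf : ℝ)
    (hLf : 0 ≤ Lf) (hLh : 0 ≤ Lh) (hρ : 0 ≤ ρ) (hρf : 0 ≤ ρf)
    (hfd : Differentiable ℝ f)
    (hflip : ∀ x y : E, ‖gradient f x - gradient f y‖ ≤ Lf * ‖x - y‖)
    (hfwc : ConvexOn ℝ Set.univ (fun x : E => f x + (ρf / 2) * ‖x‖ ^ 2))
    (hhd : Differentiable ℝ h)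
    (hhlip : ∀ x y : E, ‖gradient h x - gradient h y‖ ≤ Lh * ‖x - y‖)
    (hgtop : ∃ x, g x ≠ ⊤) (hgbot : ∀ x, g x ≠ ⊥)
    (hglsc : LowerSemicontinuous g)
    (hwc : WeaklyConvexE ρ g)
    (γ lam : ℝ) (hγ0 : 0 < γ) (hγρ : γ * ρ < 1) (hγρf : γ * ρf < 1) (hlam : 0 < lam)
    (Y T : E → E)
    (hY : ∀ x : E, ∀ w : E,
      g (Y x) + ((1 / (2 * γ) *
        ‖Y x - (x - γ • gradient (fun v => f v + h v) x)‖ ^ 2 : ℝ) : EReal) ≤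
      g w + ((1 / (2 * γ) *
        ‖w - (x - γ • gradient (fun v => f v + h v) x)‖ ^ 2 : ℝ) : EReal))
    (hYuniq : ∀ x y' : E, (∀ w : E,
      g y' + ((1 / (2 * γ) *
        ‖y' - (x - γ • gradient (fun v => f v + h v) x)‖ ^ 2 : ℝ) : EReal) ≤
      g w + ((1 / (2 * γ) *
        ‖w - (x - γ • gradient (fun v => f v + h v) x)‖ ^ 2 : ℝ) : EReal)) → y' = Y x)
    (hT : ∀ x : E, ∀ u : E,
      f (T x) + 1 / (2 * γ) *
        ‖T x - ((1 - lam) • x + γ • gradient f x + lam • Y x)‖ ^ 2 ≤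
      f u + 1 / (2 * γ) *
        ‖u - ((1 - lam) • x + γ • gradient f x + lam • Y x)‖ ^ 2)
    (hTuniq : ∀ x u' : E, (∀ u : E,
      f u' + 1 / (2 * γ) *
        ‖u' - ((1 - lam) • x + γ • gradient f x + lam • Y x)‖ ^ 2 ≤
      f u + 1 / (2 * γ) *
        ‖u - ((1 - lam) • x + γ • gradient f x + lam • Y x)‖ ^ 2) → u' = T x) :
    ∀ xbar : E, T xbar = xbar ↔ Y xbar = xbar := by
  intro xbar
  have hγne : γ ≠ 0 := ne_of_gt hγ0
  have hgrad := phi_hasGradientAt f hfd (1 / (2 * γ))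
    ((1 - lam) • xbar + γ • gradient f xbar + lam • Y xbar) xbar
  constructor
  · intro hTfix
    have hmin : ∀ u, f xbar + 1 / (2 * γ) *
        ‖xbar - ((1 - lam) • xbar + γ • gradient f xbar + lam • Y xbar)‖ ^ 2 ≤
        f u + 1 / (2 * γ) *
        ‖u - ((1 - lam) • xbar + γ • gradient f xbar + lam • Y xbar)‖ ^ 2 := by
      intro u
      have := hT xbar u
      rwa [hTfix] at this
    have h0 := min_grad_zero _ hgrad hmin
    have hkey : gradient f xbar + (2 * (1 / (2 * γ))) •
        (xbar - ((1 - lam) • xbar + γ • gradient f xbar + lam • Y xbar)) =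
        (lam / γ) • (xbar - Y xbar) := by
      match_scalars <;> (try field_simp) <;> (try ring)
    rw [hkey] at h0
    rcases smul_eq_zero.mp h0 with hc | hc
    · exact absurd hc (div_ne_zero (ne_of_gt hlam) hγne)
    · rw [sub_eq_zero] at hc
      exact hc.symm
  · intro hYfix
    have h0 : gradient f xbar + (2 * (1 / (2 * γ))) •
        (xbar - ((1 - lam) • xbar + γ • gradient f xbar + lam • Y xbar)) = 0 := by
      rw [hYfix]
      match_scalars <;> (try field_simp) <;> (try ring)
    rw [h0] at hgrad
    have hconv := phi_convex f ρf γ hγ0 hρf hγρf hfwc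
      ((1 - lam) • xbar + γ • gradient f xbar + lam • Y xbar)
    have hmin : ∀ u, f xbar + 1 / (2 * γ) *
        ‖xbar - ((1 - lam) • xbar + γ • gradient f xbar + lam • Y xbar)‖ ^ 2 ≤
        f u + 1 / (2 * γ) *
        ‖u - ((1 - lam) • xbar + γ • gradient f xbar + lam • Y xbar)‖ ^ 2 := by
      intro u
      have := convex_grad_le _ hconv hgrad u
      simp only [inner_zero_left] at this
      linarith
    exact (hTuniq xbar xbar hmin).symm
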